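/- The quotient CR_X = U_X/ζ, with the multiplication and unary operation induced from U_X, is a completely regular semigroup, and it is a free completely regular semigroup on X: for every completely regular semigroup S and every function f : X → S there exists a unique function F : U_X/ζ → S preserving multiplication and the unary operation such that F(xζ) = f(x) for every x ∈ X. -/

import Mathlib

/-- The opening symbol λ. -/
def lam (X : Type*) : X ⊕ Bool := Sum.inr false

/-- The closing symbol ρ. -/
def rho (X : Type*) : X ⊕ Bool := Sum.inr true

/-- For a word `u`, the word `u⁻¹ = λ u ρ`. -/
def winv {X : Type*} (u : List (X ⊕ Bool)) : List (X ⊕ Bool) :=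
  [lam X] ++ u ++ [rho X]

/-- `U_X`: the least subset of `Y⁺` containing the one-letter words from `X`
and closed under concatenation and `u ↦ u⁻¹`. -/
inductive UX (X : Type*) : List (X ⊕ Bool) → Prop
  | var (x : X) : UX X [Sum.inl x]
  | mul {u v : List (X ⊕ Bool)} : UX X u → UX X v → UX X (u ++ v)
  | inv {u : List (X ⊕ Bool)} : UX X u → UX X (winv u)

/-- Elements of `U_X` as a type. -/
def UWord (X : Type*) := {w : List (X ⊕ Bool) // UX X w}

/-- Concatenation on `U_X`. -/
def umul {X : Type*} (u v : UWord X) : UWord X := ⟨u.1 ++ v.1, UX.mul u.2 v.2⟩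

/-- The unary operation `u ↦ u⁻¹` on `U_X`. -/
def uinv {X : Type*} (u : UWord X) : UWord X := ⟨winv u.1, UX.inv u.2⟩

/-- `ζ`: the least equivalence relation on `U_X` containing the pairs
`(w, w w⁻¹ w)`, `(w, (w⁻¹)⁻¹)`, `(w w⁻¹, w⁻¹ w)` and compatible with
concatenation and the unary operation. -/
inductive zeta (X : Type*) : UWord X → UWord X → Prop
  | cr1 (w : UWord X) : zeta X w (umul (umul w (uinv w)) w)
  | cr2 (w : UWord X) : zeta X w (uinv (uinv w))
  | cr3 (w : UWord X) : zeta X (umul w (uinv w)) (umul (uinv w) w)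
  | refl (w : UWord X) : zeta X w w
  | symm {u v : UWord X} : zeta X u v → zeta X v u
  | trans {u v w : UWord X} : zeta X u v → zeta X v w → zeta X u w
  | mul {u u' v v' : UWord X} : zeta X u u' → zeta X v v' →
      zeta X (umul u v) (umul u' v')
  | inv {u v : UWord X} : zeta X u v → zeta X (uinv u) (uinv v)


section Aux

variable {X : Type*} {S : Type} [Semigroup S]

/-- multiply `s` onto an optional accumulator -/
def mo : Option S → S → S
  | none, s => s
  | some a, s => a * s

lemma mo_mul (o : Option S) (a b : S) : mo o (a * b) = mo o a * b := by
  cases o <;> simp [mo, mul_assoc]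

variable (sinv : S → S) (f : X → S)

/-- one step of the stack machine -/
def step (c : X ⊕ Bool) (st : List (Option S)) : Option (List (Option S)) :=
  match c, st with
  | Sum.inl x, o :: rest => some (some (mo o (f x)) :: rest)
  | Sum.inl _, [] => none
  | Sum.inr false, st => some (none :: st)
  | Sum.inr true, some a :: o :: rest => some (some (mo o (sinv a)) :: rest)
  | Sum.inr true, _ => none

/-- run the stack machine on a word -/
def run (st : List (Option S)) : List (X ⊕ Bool) → Option (List (Option S))
  | [] => some st
  | c :: w =>
    match step sinv f c st with
    | some st' => run st' w
    | none => none

lemma run_append (st : List (Option S)) (u v : List (X ⊕ Bool)) :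
    run sinv f st (u ++ v) = (run sinv f st u).bind fun st' => run sinv f st' v := by
  induction u generalizing st with
  | nil => rfl
  | cons c w ih =>
      show run sinv f st (c :: (w ++ v)) = _
      rw [run]
      cases h : step sinv f c st with
      | none => simp [run, h]
      | some st' => simp [run, h, ih]

lemma run_cons (st : List (Option S)) (c : X ⊕ Bool) (w : List (X ⊕ Bool)) :
    run sinv f st (c :: w) =
      (match step sinv f c st with
       | some st' => run sinv f st' w
       | none => none) := by
  rw [run]

lemma run_nil (st : List (Option S)) : run sinv f st [] = some st := rfl

lemma run_exists {w : List (X ⊕ Bool)} (hw : UX X w) :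
    ∃ s : S, ∀ (o : Option S) (rest : List (Option S)),
      run sinv f (o :: rest) w = some (some (mo o s) :: rest) := by
  induction hw with
  | var x =>
      exact ⟨f x, fun o rest => by simp [run_cons, run_nil, step]⟩
  | mul hu hv ihu ihv =>
      obtain ⟨su, hsu⟩ := ihu
      obtain ⟨sv, hsv⟩ := ihv
      refine ⟨su * sv, fun o rest => ?_⟩
      rw [run_append, hsu o rest, Option.bind_some, hsv]
      rw [show mo (some (mo o su)) sv = mo o (su * sv) from (mo_mul o su sv).symm]
  | @inv a ha iha =>
      obtain ⟨su, hsu⟩ := iha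
      refine ⟨sinv su, fun o rest => ?_⟩
      show run sinv f (o :: rest) ([lam X] ++ a ++ [rho X]) = _
      rw [run_append, run_append]
      rw [show run sinv f (o :: rest) [lam X] = some (none :: o :: rest) from rfl]
      rw [Option.bind_some, hsu none (o :: rest), Option.bind_some]
      rfl

/-- extract the evaluated value -/
def eval? (u : UWord X) : Option S :=
  match run sinv f [none] u.1 with
  | some [some s] => some s
  | _ => none

lemma eval?_isSome (u : UWord X) : (eval? sinv f u).isSome := by
  obtain ⟨s, hs⟩ := run_exists sinv f u.2
  simp [eval?, hs none [], mo]

/-- evaluation of a word in `U_X` in a completely regular semigroup -/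
noncomputable def eval (u : UWord X) : S := (eval? sinv f u).get (eval?_isSome sinv f u)

lemma eval_run (u : UWord X) : ∀ (o : Option S) (rest : List (Option S)),
    run sinv f (o :: rest) u.1 = some (some (mo o (eval sinv f u)) :: rest) := by
  obtain ⟨s, hs⟩ := run_exists sinv f u.2
  have he : eval sinv f u = s := by
    have : eval? sinv f u = some s := by simp [eval?, hs none [], mo]
    simp [eval, this]
  rw [he]; exact hs

lemma eval_eq_of (u : UWord X) (s : S)
    (h : ∀ (o : Option S) (rest : List (Option S)),
      run sinv f (o :: rest) u.1 = some (some (mo o s) :: rest)) :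
    eval sinv f u = s := by
  have h1 := eval_run sinv f u none []
  have h2 := h none []
  rw [h1] at h2
  simpa [mo] using h2

lemma eval_mul (u v : UWord X) :
    eval sinv f (umul u v) = eval sinv f u * eval sinv f v := by
  apply eval_eq_of
  intro o rest
  show run sinv f (o :: rest) (u.1 ++ v.1) = _
  rw [run_append, eval_run sinv f u o rest, Option.bind_some, eval_run sinv f v]
  rw [show mo (some (mo o (eval sinv f u))) (eval sinv f v)
        = mo o (eval sinv f u * eval sinv f v) from (mo_mul o _ _).symm]

lemma eval_inv (u : UWord X) :
    eval sinv f (uinv u) = sinv (eval sinv f u) := by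
  apply eval_eq_of
  intro o rest
  show run sinv f (o :: rest) ([lam X] ++ u.1 ++ [rho X]) = _
  rw [run_append, run_append]
  rw [show run sinv f (o :: rest) [lam X] = some (none :: o :: rest) from rfl]
  rw [Option.bind_some, eval_run sinv f u none (o :: rest), Option.bind_some]
  rfl

lemma eval_var (x : X) :
    eval sinv f (⟨[Sum.inl x], UX.var x⟩ : UWord X) = f x := by
  apply eval_eq_of
  intro o rest
  rfl

lemma eval_zeta (h1 : ∀ a : S, a * sinv a * a = a) (h2 : ∀ a : S, sinv (sinv a) = a)
    (h3 : ∀ a : S, a * sinv a = sinv a * a)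
    {u v : UWord X} (h : zeta X u v) : eval sinv f u = eval sinv f v := by
  induction h with
  | cr1 w => simp [eval_mul, eval_inv, h1]
  | cr2 w => simp [eval_inv, h2]
  | cr3 w => simp [eval_mul, eval_inv, h3]
  | refl w => rfl
  | symm _ ih => exact ih.symm
  | trans _ _ ih1 ih2 => exact ih1.trans ih2
  | mul _ _ ih1 ih2 => simp [eval_mul, ih1, ih2]
  | inv _ ih => simp [eval_inv, ih]

end Aux

/-- `CR_X = U_X/ζ`, with the induced operations, is a free completely regular
semigroup on `X`. -/
theorem stmt4 {X : Type*} :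
    ∃ (qmul : Quot (zeta X) → Quot (zeta X) → Quot (zeta X))
      (qinv : Quot (zeta X) → Quot (zeta X)),
      -- the operations are induced from `U_X`
      (∀ u v : UWord X, qmul (Quot.mk _ u) (Quot.mk _ v) = Quot.mk _ (umul u v)) ∧
      (∀ u : UWord X, qinv (Quot.mk _ u) = Quot.mk _ (uinv u)) ∧
      -- `U_X/ζ` is a completely regular semigroup
      (∀ a b c : Quot (zeta X), qmul (qmul a b) c = qmul a (qmul b c)) ∧
      (∀ a : Quot (zeta X), qmul (qmul a (qinv a)) a = a) ∧
      (∀ a : Quot (zeta X), qinv (qinv a) = a) ∧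
      (∀ a : Quot (zeta X), qmul a (qinv a) = qmul (qinv a) a) ∧
      -- and it is free on `X` among completely regular semigroups
      (∀ (S : Type) [Semigroup S] (sinv : S → S),
        (∀ a : S, a * sinv a * a = a) →
        (∀ a : S, sinv (sinv a) = a) →
        (∀ a : S, a * sinv a = sinv a * a) →
        ∀ f : X → S, ∃! F : Quot (zeta X) → S,
          (∀ a b : Quot (zeta X), F (qmul a b) = F a * F b) ∧
          (∀ a : Quot (zeta X), F (qinv a) = sinv (F a)) ∧
          (∀ x : X, F (Quot.mk _ (⟨[Sum.inl x], UX.var x⟩ : UWord X)) = f x)) := by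

  refine ⟨Quot.lift (fun u => Quot.lift (fun v => Quot.mk _ (umul u v))
      (fun v v' h => Quot.sound (zeta.mul (zeta.refl u) h)))
      (fun u u' h => funext fun q => Quot.inductionOn q fun v =>
        Quot.sound (zeta.mul h (zeta.refl v))),
    Quot.lift (fun u => Quot.mk _ (uinv u)) (fun u v h => Quot.sound (zeta.inv h)),
    fun u v => rfl, fun u => rfl, ?_, ?_, ?_, ?_, ?_⟩
  · intro a b c
    induction a using Quot.inductionOn
    induction b using Quot.inductionOn
    induction c using Quot.inductionOn
    rename_i u v w
    have h : umul (umul u v) w = umul u (umul v w) :=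
      Subtype.ext (List.append_assoc u.1 v.1 w.1)
    show Quot.mk _ (umul (umul u v) w) = Quot.mk _ (umul u (umul v w))
    rw [h]
  · intro a
    induction a using Quot.inductionOn with | _ u => exact (Quot.sound (zeta.cr1 u)).symm
  · intro a
    induction a using Quot.inductionOn with | _ u => exact (Quot.sound (zeta.cr2 u)).symm
  · intro a
    induction a using Quot.inductionOn with | _ u => exact Quot.sound (zeta.cr3 u)
  · intro S _ sinv h1 h2 h3 f
    refine ⟨Quot.lift (eval sinv f) (fun u v h => eval_zeta sinv f h1 h2 h3 h),
      ⟨?_, ?_, ?_⟩, ?_⟩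
    · intro a b
      induction a using Quot.inductionOn
      induction b using Quot.inductionOn
      exact eval_mul sinv f _ _
    · intro a
      induction a using Quot.inductionOn
      exact eval_inv sinv f _
    · intro x
      exact eval_var sinv f x
    · rintro G ⟨hGm, hGi, hGx⟩
      funext q
      induction q using Quot.inductionOn with | _ u =>
      obtain ⟨w, hw⟩ := u
      show G (Quot.mk _ ⟨w, hw⟩) = eval sinv f ⟨w, hw⟩
      induction hw with
      | var x => rw [hGx x, eval_var]
      | @mul a b ha hb iha ihb =>
          have h := hGm (Quot.mk _ ⟨a, ha⟩) (Quot.mk _ ⟨b, hb⟩)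
          rw [iha, ihb] at h
          have e : (⟨a ++ b, UX.mul ha hb⟩ : UWord X) = umul ⟨a, ha⟩ ⟨b, hb⟩ := rfl
          rw [e]
          exact h.trans (eval_mul sinv f _ _).symm
      | @inv a ha iha =>
          have h := hGi (Quot.mk _ ⟨a, ha⟩)
          rw [iha] at h
          have e : (⟨winv a, UX.inv ha⟩ : UWord X) = uinv ⟨a, ha⟩ := rfl
          rw [e]
          exact h.trans (eval_inv sinv f _).symm
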